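/- Let α', β' ∈ (0,1) with α' + β' < 1 and a ∈ (0,1). Then (sin(β'π)/π)·a^{1−α'}·(1−a)^{1−β'}·∫₀¹ t^{1−α'−β'}(1−t)^{β'−1}(1−at)^{−1} dt = (Γ(2−α'−β')/(Γ(1−α')Γ(1−β')))·∫₀^a t^{−α'}(1−t)^{−β'} dt. -/

import Mathlib

open Real MeasureTheory Set

namespace Stmt17

noncomputable def P (c : ℝ) (n : ℕ) : ℝ := ∏ i ∈ Finset.range n, (c + i)

lemma P_pos {c : ℝ} (hc : 0 < c) (n : ℕ) : 0 < P c n :=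
  Finset.prod_pos fun i _ => by positivity

lemma P_succ (c : ℝ) (n : ℕ) : P c (n + 1) = P c n * (c + n) :=
  Finset.prod_range_succ _ _

lemma Gamma_add_nat {c : ℝ} (hc : 0 < c) (n : ℕ) :
    Real.Gamma (c + n) = P c n * Real.Gamma c := by
  induction n with
  | zero => simp [P]
  | succ n ih =>
    have h1 : c + (n + 1 : ℕ) = (c + n) + 1 := by push_cast; ring
    rw [h1, Real.Gamma_add_one (by positivity), ih, P_succ]; ring

lemma P_le_factorial {c : ℝ} (hc : 0 < c) (hc1 : c ≤ 1) (n : ℕ) :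
    P c n ≤ n.factorial := by
  induction n with
  | zero => simp [P]
  | succ n ih =>
    rw [P_succ, Nat.factorial_succ]
    push_cast
    have h1 : c + n ≤ n + 1 := by linarith
    have := (P_pos hc n).le
    nlinarith [Nat.one_le_iff_ne_zero.mpr (Nat.factorial_ne_zero n),
      (Nat.cast_le (α := ℝ)).mpr (Nat.one_le_iff_ne_zero.mpr (Nat.factorial_ne_zero n))]

lemma exp_hasSum (x : ℝ) : HasSum (fun n : ℕ => x ^ n / n.factorial) (Real.exp x) := by
  rw [Real.exp_eq_exp_ℝ]
  exact NormedSpace.expSeries_div_hasSum_exp x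

/-- Binomial series `(1-x)^{-c} = ∑ (c)_n / n! xⁿ` for `0 < c ≤ 1`, `0 ≤ x < 1`. -/
lemma hasSum_binomial {c x : ℝ} (hc : 0 < c) (hc1 : c ≤ 1) (hx : 0 ≤ x) (hx1 : x < 1) :
    HasSum (fun n : ℕ => P c n / n.factorial * x ^ n) ((1 - x) ^ (-c)) := by
  set F : ℕ → ℝ → ℝ := fun n t => x ^ n / n.factorial * (Real.exp (-t) * t ^ (c + n - 1)) with hF
  have hFint : ∀ n, Integrable (F n) (volume.restrict (Ioi (0:ℝ))) := by
    intro n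
    exact (Real.GammaIntegral_convergent (s := c + n) (by positivity)).const_mul _
  have hFval : ∀ n, ∫ t in Ioi (0:ℝ), F n t =
      x ^ n / n.factorial * Real.Gamma (c + n) := by
    intro n
    rw [hF]
    simp only []
    rw [MeasureTheory.integral_const_mul, ← Real.Gamma_eq_integral (by positivity : (0:ℝ) < c + n)]
  have hFnorm : ∀ n, ∫ t in Ioi (0:ℝ), ‖F n t‖ =
      x ^ n / n.factorial * Real.Gamma (c + n) := by
    intro n
    rw [← hFval n]
    refine setIntegral_congr_fun measurableSet_Ioi fun t ht => ?_
    rw [Real.norm_eq_abs, abs_of_nonneg]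
    have ht' : (0:ℝ) < t := ht
    positivity
  -- summability of norms
  have hsum : Summable fun n => ∫ t in Ioi (0:ℝ), ‖F n t‖ := by
    apply Summable.of_nonneg_of_le (fun n => by
      rw [hFnorm n]
      have := Real.Gamma_pos_of_pos (by positivity : (0:ℝ) < c + n)
      positivity)
      (fun n => ?_) ((summable_geometric_of_lt_one hx hx1).mul_left (Real.Gamma c))
    rw [hFnorm n, Gamma_add_nat hc n]
    have h1 : x ^ n / n.factorial * (P c n * Real.Gamma c)
        = (P c n / n.factorial) * Real.Gamma c * x ^ n := by ring
    rw [h1]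
    have h2 : P c n / n.factorial ≤ 1 := by
      rw [div_le_one (by positivity)]
      exact P_le_factorial hc hc1 n
    have hΓ := (Real.Gamma_pos_of_pos hc)
    have hxn : (0:ℝ) ≤ x ^ n := by positivity
    nlinarith [P_pos hc n, mul_le_of_le_one_left hΓ.le h2]
  have key := MeasureTheory.hasSum_integral_of_summable_integral_norm hFint hsum
  -- identify the integral of the tsum
  have htsum : ∫ t in Ioi (0:ℝ), (∑' n, F n t) =
      ∫ t in Ioi (0:ℝ), t ^ (c - 1) * Real.exp (-((1 - x) * t)) := by
    refine setIntegral_congr_fun measurableSet_Ioi fun t ht => ?_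
    have ht' : (0:ℝ) < t := ht
    have hexp : HasSum (fun n : ℕ => (x * t) ^ n / n.factorial) (Real.exp (x * t)) :=
      exp_hasSum (x * t)
    have hFt : ∀ n, F n t = ((x * t) ^ n / n.factorial) * (Real.exp (-t) * t ^ (c - 1)) := by
      intro n
      rw [hF]
      simp only []
      rw [mul_pow, show c + n - 1 = (c - 1) + n by ring, Real.rpow_add ht',
        Real.rpow_natCast]
      ring
    have h2 := (hexp.mul_right (Real.exp (-t) * t ^ (c - 1)))
    rw [funext hFt, h2.tsum_eq]
    calc Real.exp (x*t) * (Real.exp (-t) * t^(c-1))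
        = t^(c-1) * Real.exp (x*t + -t) := by rw [Real.exp_add]; ring
      _ = t^(c-1) * Real.exp (-((1-x)*t)) := by rw [show x*t + -t = -((1-x)*t) by ring]
  rw [htsum, Real.integral_rpow_mul_exp_neg_mul_Ioi hc (by linarith)] at key
  have h1x : (0:ℝ) < 1 - x := by linarith
  have hval : (1 / (1 - x)) ^ c = (1 - x) ^ (-c) := by
    rw [one_div, Real.inv_rpow h1x.le, ← Real.rpow_neg h1x.le]
  rw [hval] at key
  have hΓ := Real.Gamma_pos_of_pos hc
  rw [← hasSum_mul_right_iff hΓ.ne']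
  convert key using 2 with n
  · rfl
  rw [hFval n, Gamma_add_nat hc n]
  ring


/-- Complex beta integral equals coercion of the real one. -/
lemma betaIntegral_ofReal {x y : ℝ} :
    Complex.betaIntegral x y =
      ((∫ t in (0:ℝ)..1, t ^ (x - 1) * (1 - t) ^ (y - 1) : ℝ) : ℂ) := by
  rw [Complex.betaIntegral, ← intervalIntegral.integral_ofReal]
  refine intervalIntegral.integral_congr fun t ht => ?_
  rw [Set.uIcc_of_le (by norm_num : (0:ℝ) ≤ 1)] at ht
  rw [Complex.ofReal_mul, Complex.ofReal_cpow ht.1, Complex.ofReal_cpow (by linarith [ht.2])]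
  push_cast
  ring

/-- Real Beta integral over `Ioo 0 1`. -/
lemma betaIoo {x y : ℝ} (hx : 0 < x) (hy : 0 < y) :
    ∫ t in Ioo (0:ℝ) 1, t ^ (x - 1) * (1 - t) ^ (y - 1) =
      Real.Gamma x * Real.Gamma y / Real.Gamma (x + y) := by
  have h := Complex.Gamma_mul_Gamma_eq_betaIntegral
    (by simpa using hx : 0 < (x:ℂ).re) (by simpa using hy : 0 < (y:ℂ).re)
  rw [betaIntegral_ofReal, ← Complex.ofReal_add, Complex.Gamma_ofReal, Complex.Gamma_ofReal,
    Complex.Gamma_ofReal, ← Complex.ofReal_mul, ← Complex.ofReal_mul] at h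
  have h' := Complex.ofReal_inj.mp h
  have hΓ := Real.Gamma_pos_of_pos (by positivity : 0 < x + y)
  have h2 : ∫ t in (0:ℝ)..1, t ^ (x - 1) * (1 - t) ^ (y - 1)
      = ∫ t in Ioo (0:ℝ) 1, t ^ (x - 1) * (1 - t) ^ (y - 1) := by
    rw [intervalIntegral.integral_of_le (by norm_num : (0:ℝ) ≤ 1),
      MeasureTheory.integral_Ioc_eq_integral_Ioo]
  rw [h2] at h'
  field_simp
  linarith [h']

/-- Integrability of `t^p (1-t)^q` on `Ioo 0 1` for `p, q > -1`. -/
lemma integrableOn_Ioo_rpow {p q : ℝ} (hp : -1 < p) (hq : -1 < q) :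
    IntegrableOn (fun t : ℝ => t ^ p * (1 - t) ^ q) (Ioo 0 1) := by
  have h := Complex.betaIntegral_convergent
    (u := (p+1 : ℝ)) (v := (q+1 : ℝ)) (by simpa using by linarith) (by simpa using by linarith)
  have h1 : IntegrableOn (fun t : ℝ => (t:ℂ) ^ (((p+1:ℝ):ℂ) - 1) * (1 - (t:ℂ)) ^ (((q+1:ℝ):ℂ) - 1))
      (Ioo 0 1) :=
    ((intervalIntegrable_iff_integrableOn_Ioc_of_le zero_le_one).mp h).mono_set
      Ioo_subset_Ioc_self
  have h2 := h1.re
  refine (MeasureTheory.IntegrableOn.congr_fun h2 (fun t ht => ?_) measurableSet_Ioo)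
  obtain ⟨ht0, ht1⟩ := ht
  have e1 : ((p+1:ℝ):ℂ) - 1 = ((p:ℝ):ℂ) := by push_cast; ring
  have e2 : ((q+1:ℝ):ℂ) - 1 = ((q:ℝ):ℂ) := by push_cast; ring
  simp only [e1, e2]
  rw [show (1 - (t:ℂ)) = (((1-t:ℝ)):ℂ) by push_cast; ring,
    ← Complex.ofReal_cpow ht0.le, ← Complex.ofReal_cpow (by linarith), ← Complex.ofReal_mul]
  exact Complex.ofReal_re _


lemma hasSum_integral_Ioo {p q c a : ℝ} (hp : -1 < p) (hq : -1 < q) (hc : 0 < c)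
    (hc1 : c ≤ 1) (ha : 0 < a) (ha1 : a < 1) :
    HasSum (fun n : ℕ => P c n / n.factorial * a ^ n *
        ∫ s in Ioo (0:ℝ) 1, s ^ (p + n) * (1 - s) ^ q)
      (∫ s in Ioo (0:ℝ) 1, s ^ p * (1 - s) ^ q * (1 - a * s) ^ (-c)) := by
  set F : ℕ → ℝ → ℝ := fun n s => P c n / n.factorial * a ^ n * (s ^ (p + n) * (1 - s) ^ q)
    with hF
  have hint : ∀ r : ℝ, -1 < r →
      IntegrableOn (fun s : ℝ => s ^ r * (1 - s) ^ q) (Ioo 0 1) :=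
    fun r hr => integrableOn_Ioo_rpow hr hq
  have hFint : ∀ n : ℕ, Integrable (F n) (volume.restrict (Ioo (0:ℝ) 1)) := by
    intro n
    exact ((hint (p + n) (by linarith [Nat.cast_nonneg (α := ℝ) n])).const_mul _)
  have hcoeff : ∀ n : ℕ, 0 ≤ P c n / n.factorial * a ^ n := by
    intro n
    have := (P_pos hc n).le
    positivity
  have hFval : ∀ n, ∫ s in Ioo (0:ℝ) 1, F n s =
      P c n / n.factorial * a ^ n * ∫ s in Ioo (0:ℝ) 1, s ^ (p + n) * (1 - s) ^ q := by
    intro n; rw [hF]; simp only []; rw [MeasureTheory.integral_const_mul]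
  have hmono : ∀ n : ℕ, ∫ s in Ioo (0:ℝ) 1, s ^ (p + n) * (1 - s) ^ q ≤
      ∫ s in Ioo (0:ℝ) 1, s ^ p * (1 - s) ^ q := by
    intro n
    refine setIntegral_mono_on (hint _ (by linarith [Nat.cast_nonneg (α := ℝ) n])) (hint p hp) measurableSet_Ioo ?_
    intro s hs
    have h1 : s ^ (p + n) ≤ s ^ p :=
      Real.rpow_le_rpow_of_exponent_ge hs.1 (by linarith [hs.2]) (by linarith [Nat.cast_nonneg (α := ℝ) n])
    have h2 : (0:ℝ) ≤ (1 - s) ^ q := Real.rpow_nonneg (by linarith [hs.2]) q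
    nlinarith [Real.rpow_nonneg hs.1.le (p + (n:ℝ))]
  have hB0 : (0:ℝ) ≤ ∫ s in Ioo (0:ℝ) 1, s ^ p * (1 - s) ^ q := by
    refine setIntegral_nonneg measurableSet_Ioo fun s hs => ?_
    have := hs.1.le; have := hs.2.le
    have h2 : (0:ℝ) ≤ 1 - s := by linarith
    positivity
  have hFnorm : ∀ n, ∫ s in Ioo (0:ℝ) 1, ‖F n s‖ = ∫ s in Ioo (0:ℝ) 1, F n s := by
    intro n
    refine setIntegral_congr_fun measurableSet_Ioo fun s hs => ?_
    rw [Real.norm_eq_abs, abs_of_nonneg]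
    have h1 := hs.1; have h2 := hs.2
    have h3 : (0:ℝ) ≤ 1 - s := by linarith
    have := (P_pos hc n).le
    positivity
  have hsum : Summable fun n => ∫ s in Ioo (0:ℝ) 1, ‖F n s‖ := by
    refine Summable.of_nonneg_of_le (fun n => ?_) (fun n => ?_)
      (((summable_geometric_of_lt_one ha.le ha1)).mul_left
        (∫ s in Ioo (0:ℝ) 1, s ^ p * (1 - s) ^ q))
    · rw [hFnorm n]
      exact setIntegral_nonneg measurableSet_Ioo fun s hs => by
        have h1 := hs.1; have h2 := hs.2
        have h3 : (0:ℝ) ≤ 1 - s := by linarith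
        have := (P_pos hc n).le
        positivity
    · rw [hFnorm n, hFval n]
      have hc2 : P c n / n.factorial * a ^ n ≤ a ^ n := by
        have h2 : P c n / n.factorial ≤ 1 := by
          rw [div_le_one (by positivity)]
          exact P_le_factorial hc hc1 n
        have hxn : (0:ℝ) ≤ a ^ n := by positivity
        nlinarith
      have h3 : (0:ℝ) ≤ ∫ s in Ioo (0:ℝ) 1, s ^ (p + n) * (1 - s) ^ q := by
        refine setIntegral_nonneg measurableSet_Ioo fun s hs => ?_
        have h1 := hs.1; have h2 := hs.2
        have h4 : (0:ℝ) ≤ 1 - s := by linarith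
        positivity
      calc P c n / n.factorial * a ^ n * ∫ s in Ioo (0:ℝ) 1, s ^ (p + n) * (1 - s) ^ q
          ≤ a ^ n * ∫ s in Ioo (0:ℝ) 1, s ^ (p + n) * (1 - s) ^ q := by
            exact mul_le_mul_of_nonneg_right hc2 h3
        _ ≤ a ^ n * ∫ s in Ioo (0:ℝ) 1, s ^ p * (1 - s) ^ q := by
            exact mul_le_mul_of_nonneg_left (hmono n) (by positivity)
        _ = (∫ s in Ioo (0:ℝ) 1, s ^ p * (1 - s) ^ q) * a ^ n := by ring
  have key := MeasureTheory.hasSum_integral_of_summable_integral_norm hFint hsum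
  have htsum : ∫ s in Ioo (0:ℝ) 1, (∑' n, F n s) =
      ∫ s in Ioo (0:ℝ) 1, s ^ p * (1 - s) ^ q * (1 - a * s) ^ (-c) := by
    refine setIntegral_congr_fun measurableSet_Ioo fun s hs => ?_
    obtain ⟨hs0, hs1⟩ := hs
    have hbin := hasSum_binomial hc hc1 (by positivity : (0:ℝ) ≤ a * s)
      (by nlinarith : a * s < 1)
    have h2 := hbin.mul_right (s ^ p * (1 - s) ^ q)
    have hFs : ∀ n, F n s = P c n / n.factorial * (a * s) ^ n * (s ^ p * (1 - s) ^ q) := by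
      intro n
      rw [hF]
      simp only []
      rw [mul_pow, Real.rpow_add hs0, Real.rpow_natCast]
      ring
    rw [funext hFs, h2.tsum_eq]
    ring
  rw [htsum] at key
  convert key using 2 with n
  · rfl
  exact (hFval n).symm


lemma subst_right {p q a : ℝ} (ha0 : 0 < a) (ha1 : a < 1) :
    ∫ t in Ioo (0:ℝ) a, t ^ p * (1 - t) ^ q
      = ∫ s in Ioo (0:ℝ) 1, a * ((a*s) ^ p * (1 - a*s) ^ q) := by
  have himg : (fun s : ℝ => a * s) '' Ioo 0 1 = Ioo 0 a := by
    rw [image_mul_left_Ioo ha0]; norm_num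
  have hder : ∀ s ∈ Ioo (0:ℝ) 1, HasDerivWithinAt (fun s : ℝ => a * s) a (Ioo 0 1) s :=
    fun s _ => by simpa using ((hasDerivAt_id s).const_mul a).hasDerivWithinAt
  have hinj : InjOn (fun s : ℝ => a * s) (Ioo 0 1) :=
    fun x _ y _ h => by
      simp only [] at h
      exact mul_left_cancel₀ ha0.ne' h
  have := MeasureTheory.integral_image_eq_integral_abs_deriv_smul measurableSet_Ioo hder hinj
    (fun t => t ^ p * (1 - t) ^ q)
  rw [himg] at this
  rw [this]
  refine setIntegral_congr_fun measurableSet_Ioo fun s hs => ?_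
  rw [smul_eq_mul, abs_of_pos ha0]

lemma subst_left {α' β' a : ℝ} (hα0 : 0 < α') (hβ0 : 0 < β') (hβ1 : β' < 1)
    (hαβ : α' + β' < 1) (ha0 : 0 < a) (ha1 : a < 1) :
    ∫ t in Ioo (0:ℝ) 1, t ^ (1 - α' - β') * (1 - t) ^ (β' - 1) * (1 - a*t)⁻¹
      = (1-a) ^ (β' - 1) *
        ∫ s in Ioo (0:ℝ) 1, s ^ (β'-1) * (1-s) ^ (1-α'-β') * (1 - a*s) ^ (α'-1) := by
  set φ : ℝ → ℝ := fun s => (1 - s) / (1 - a*s) with hφ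
  have hden : ∀ s : ℝ, s < 1 → 0 < s → 0 < 1 - a*s := by
    intro s h1 h0; nlinarith
  have hmem : ∀ s ∈ Ioo (0:ℝ) 1, φ s ∈ Ioo (0:ℝ) 1 := by
    intro s hs
    have hB := hden s hs.2 hs.1
    constructor
    · exact div_pos (by linarith [hs.2]) hB
    · rw [div_lt_one hB]; nlinarith [hs.1]
  have hinv : ∀ s ∈ Ioo (0:ℝ) 1, φ (φ s) = s := by
    intro s hs
    have hB := hden s hs.2 hs.1
    rw [hφ]
    simp only []
    have e1 : (1:ℝ) - (1 - s)/(1 - a*s) = s*(1-a)/(1 - a*s) := by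
      rw [eq_div_iff hB.ne', sub_mul, div_mul_cancel₀ _ hB.ne']; ring
    have e2 : (1:ℝ) - a*((1 - s)/(1 - a*s)) = (1-a)/(1 - a*s) := by
      rw [eq_div_iff hB.ne', sub_mul, mul_assoc a, div_mul_cancel₀ _ hB.ne']; ring
    rw [e1, e2]
    have h1a : (1:ℝ) - a ≠ 0 := by linarith
    rw [div_div_div_cancel_right₀ hB.ne', mul_div_assoc, div_self h1a, mul_one]
  have himg : φ '' Ioo 0 1 = Ioo 0 1 := by
    apply Subset.antisymm
    · rintro t ⟨s, hs, rfl⟩; exact hmem s hs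
    · intro t ht; exact ⟨φ t, hmem t ht, hinv t ht⟩
  have hinj : InjOn φ (Ioo 0 1) := by
    intro x hx y hy h
    rw [← hinv x hx, ← hinv y hy, h]
  have hder : ∀ s ∈ Ioo (0:ℝ) 1,
      HasDerivWithinAt φ ((a-1)/(1 - a*s)^2) (Ioo 0 1) s := by
    intro s hs
    have hB := (hden s hs.2 hs.1).ne'
    have h1 : HasDerivAt (fun s : ℝ => 1 - s) (-1) s := by
      simpa using (hasDerivAt_id s).const_sub 1
    have h2 : HasDerivAt (fun s : ℝ => 1 - a*s) (-a) s := by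
      simpa using ((hasDerivAt_id s).const_mul a).const_sub 1
    have := h1.div h2 hB
    exact (this.hasDerivWithinAt (s := Ioo 0 1)).congr_deriv (by ring)
  have := MeasureTheory.integral_image_eq_integral_abs_deriv_smul measurableSet_Ioo hder hinj
    (fun t => t ^ (1 - α' - β') * (1 - t) ^ (β' - 1) * (1 - a*t)⁻¹)
  rw [himg] at this
  rw [this, ← MeasureTheory.integral_const_mul]
  refine setIntegral_congr_fun measurableSet_Ioo fun s hs => ?_
  obtain ⟨hs0, hs1⟩ := hs
  have hA : (0:ℝ) < 1 - s := by linarith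
  have hB : (0:ℝ) < 1 - a*s := hden s hs1 hs0
  have h1a : (0:ℝ) < 1 - a := by linarith
  have e1 : (1:ℝ) - (1 - s)/(1 - a*s) = s*(1-a)/(1 - a*s) := by
      rw [eq_div_iff hB.ne', sub_mul, div_mul_cancel₀ _ hB.ne']; ring
  have e2 : (1:ℝ) - a*((1 - s)/(1 - a*s)) = (1-a)/(1 - a*s) := by
      rw [eq_div_iff hB.ne', sub_mul, mul_assoc a, div_mul_cancel₀ _ hB.ne']; ring
  rw [smul_eq_mul, hφ]
  simp only []
  rw [e1, e2, Real.div_rpow hA.le hB.le, Real.div_rpow (by positivity) hB.le,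
    Real.mul_rpow hs0.le h1a.le, abs_div, abs_of_neg (by linarith : a - 1 < 0),
    abs_of_pos (by positivity : (0:ℝ) < (1 - a*s)^2)]
  have hBt : (1 - a*s) ^ (α'-1)
      = (1 - a*s) / ((1 - a*s)^(1-α'-β') * ((1 - a*s)^(β'-1) * (1 - a*s)^(2:ℕ))) := by
    rw [eq_div_iff (by positivity), ← Real.rpow_natCast _ 2, ← Real.rpow_add hB,
      ← Real.rpow_add hB, ← Real.rpow_add hB,
      show α'-1+(1-α'-β'+(β'-1+((2:ℕ):ℝ))) = (1:ℝ) by push_cast; ring, Real.rpow_one]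
  rw [hBt]
  have n1 : (1 - a*s)^(1-α'-β') ≠ 0 := by positivity
  have n2 : (1 - a*s)^(β'-1) ≠ 0 := by positivity
  field_simp
  ring


lemma termwise {α' β' a : ℝ} (hα0 : 0 < α') (hα1 : α' < 1) (hβ0 : 0 < β') (hβ1 : β' < 1)
    (hαβ : α' + β' < 1) (n : ℕ) :
    Real.sin (β' * π) / π * (P (1-α') n / n.factorial * a ^ n *
        (Real.Gamma (β' + n) * Real.Gamma (2 - α' - β') / Real.Gamma (β' + n + (2 - α' - β'))))
      = Real.Gamma (2 - α' - β') / (Real.Gamma (1 - α') * Real.Gamma (1 - β')) *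
        (P β' n / n.factorial * a ^ n *
          (Real.Gamma (1 - α' + n) * Real.Gamma 1 / Real.Gamma (1 - α' + n + 1))) := by
  have h1α : (0:ℝ) < 1 - α' := by linarith
  have hsin : Real.sin (β' * π) = π / (Real.Gamma β' * Real.Gamma (1 - β')) := by
    have h := Real.Gamma_mul_Gamma_one_sub β'
    have hspos : 0 < Real.sin (π * β') :=
      Real.sin_pos_of_pos_of_lt_pi (by positivity) (by nlinarith [Real.pi_pos])
    rw [mul_comm β' π, h]
    field_simp
  have e1 : Real.Gamma (β' + n) = P β' n * Real.Gamma β' := Gamma_add_nat hβ0 n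
  have e2 : Real.Gamma (1 - α' + n) = P (1-α') n * Real.Gamma (1-α') := Gamma_add_nat h1α n
  have e3 : Real.Gamma (β' + n + (2 - α' - β')) = P (1-α') n * (1 - α' + n) * Real.Gamma (1-α') := by
    rw [show β' + (n:ℝ) + (2 - α' - β') = (1-α') + ((n+1 : ℕ):ℝ) by push_cast; ring,
      Gamma_add_nat h1α (n+1), P_succ]
  have e4 : Real.Gamma (1 - α' + n + 1) = P (1-α') n * (1 - α' + n) * Real.Gamma (1-α') := by
    rw [show (1-α') + (n:ℝ) + 1 = (1-α') + ((n+1 : ℕ):ℝ) by push_cast; ring,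
      Gamma_add_nat h1α (n+1), P_succ]
  rw [hsin, e1, e2, e3, e4, Real.Gamma_one]
  have hπ := Real.pi_pos
  have hΓβ := Real.Gamma_pos_of_pos hβ0
  have hΓ1β := Real.Gamma_pos_of_pos (by linarith : (0:ℝ) < 1 - β')
  have hΓ1α := Real.Gamma_pos_of_pos h1α
  have hP1 := P_pos h1α n
  have hP2 := P_pos hβ0 n
  have hfa : (0:ℝ) < n.factorial := by positivity
  have hn1 : (0:ℝ) < 1 - α' + n := by positivity
  field_simp

theorem main (α' β' a : ℝ) (hα : α' ∈ Set.Ioo (0:ℝ) 1) (hβ : β' ∈ Set.Ioo (0:ℝ) 1)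
    (hαβ : α' + β' < 1) (ha : a ∈ Set.Ioo (0:ℝ) 1) :
    (Real.sin (β' * π) / π) * a ^ (1 - α') * (1 - a) ^ (1 - β') *
        ∫ t in (0:ℝ)..1, t ^ (1 - α' - β') * (1 - t) ^ (β' - 1) * (1 - a*t)⁻¹
      = (Real.Gamma (2 - α' - β') / (Real.Gamma (1 - α') * Real.Gamma (1 - β'))) *
        ∫ t in (0:ℝ)..a, t ^ (-α') * (1 - t) ^ (-β') := by
  obtain ⟨hα0, hα1⟩ := hα
  obtain ⟨hβ0, hβ1⟩ := hβ
  obtain ⟨ha0, ha1⟩ := ha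
  have h1a : (0:ℝ) < 1 - a := by linarith
  have h1α : (0:ℝ) < 1 - α' := by linarith
  -- left side
  rw [intervalIntegral.integral_of_le (by norm_num : (0:ℝ) ≤ 1),
    MeasureTheory.integral_Ioc_eq_integral_Ioo,
    subst_left hα0 hβ0 hβ1 hαβ ha0 ha1]
  -- right side
  rw [intervalIntegral.integral_of_le ha0.le,
    MeasureTheory.integral_Ioc_eq_integral_Ioo,
    subst_right (p := -α') (q := -β') ha0 ha1]
  -- rewrite RHS integrand
  have hR : ∀ s ∈ Ioo (0:ℝ) 1, a * ((a*s) ^ (-α') * (1 - a*s) ^ (-β'))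
      = a ^ (1-α') * (s ^ (-α') * (1-s) ^ (0:ℝ) * (1 - a*s) ^ (-β')) := by
    intro s hs
    obtain ⟨hs0, hs1⟩ := hs
    rw [Real.mul_rpow ha0.le hs0.le, Real.rpow_zero,
      show (1:ℝ) - α' = 1 + (-α') by ring, Real.rpow_add ha0, Real.rpow_one]
    ring
  rw [setIntegral_congr_fun measurableSet_Ioo hR, MeasureTheory.integral_const_mul]
  -- series for K
  have hK := hasSum_integral_Ioo (p := β'-1) (q := 1-α'-β') (c := 1-α') (a := a)
    (by linarith) (by linarith) h1α (by linarith) ha0 ha1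
  rw [show -(1-α') = α'-1 by ring] at hK
  -- series for J
  have hJ := hasSum_integral_Ioo (p := -α') (q := (0:ℝ)) (c := β') (a := a)
    (by linarith) (by norm_num) hβ0 (by linarith) ha0 ha1
  -- evaluate the beta integrals
  have hKterm : ∀ n : ℕ, (∫ s in Ioo (0:ℝ) 1, s ^ (β'-1+n) * (1-s) ^ (1-α'-β'))
      = Real.Gamma (β' + n) * Real.Gamma (2 - α' - β') / Real.Gamma (β' + n + (2 - α' - β')) := by
    intro n
    rw [show β'-1+(n:ℝ) = (β'+n) - 1 by ring, show (1:ℝ)-α'-β' = (2-α'-β') - 1 by ring]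
    exact betaIoo (by linarith [Nat.cast_nonneg (α := ℝ) n]) (by linarith)
  have hJterm : ∀ n : ℕ, (∫ s in Ioo (0:ℝ) 1, s ^ (-α'+n) * (1-s) ^ (0:ℝ))
      = Real.Gamma (1 - α' + n) * Real.Gamma 1 / Real.Gamma (1 - α' + n + 1) := by
    intro n
    have hb := betaIoo (x := 1-α'+(n:ℝ)) (y := (1:ℝ))
      (by linarith [Nat.cast_nonneg (α := ℝ) n]) one_pos
    rw [show (1:ℝ)-α'+(n:ℝ)-1 = -α'+n by ring, show ((1:ℝ)-1) = (0:ℝ) by norm_num] at hb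
    exact hb
  simp only [hKterm] at hK
  simp only [hJterm] at hJ
  -- combine
  have hKs := hK.mul_left (Real.sin (β' * π) / π)
  have hJs := hJ.mul_left (Real.Gamma (2 - α' - β') / (Real.Gamma (1 - α') * Real.Gamma (1 - β')))
  have hfun : (fun n : ℕ => Real.sin (β' * π) / π * (P (1-α') n / n.factorial * a ^ n *
      (Real.Gamma (β' + n) * Real.Gamma (2 - α' - β') / Real.Gamma (β' + n + (2 - α' - β')))))
      = fun n : ℕ => Real.Gamma (2 - α' - β') / (Real.Gamma (1 - α') * Real.Gamma (1 - β')) *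
        (P β' n / n.factorial * a ^ n *
          (Real.Gamma (1 - α' + n) * Real.Gamma 1 / Real.Gamma (1 - α' + n + 1))) :=
    funext fun n => termwise hα0 hα1 hβ0 hβ1 hαβ n
  rw [hfun] at hKs
  have hEq := hKs.unique hJs
  -- finish
  calc Real.sin (β' * π) / π * a ^ (1-α') * (1-a) ^ (1-β') *
        ((1-a) ^ (β'-1) * ∫ s in Ioo (0:ℝ) 1, s ^ (β'-1) * (1-s) ^ (1-α'-β') * (1-a*s) ^ (α'-1))
      = a ^ (1-α') * ((1-a) ^ (1-β') * (1-a) ^ (β'-1)) *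
        (Real.sin (β' * π) / π * ∫ s in Ioo (0:ℝ) 1,
          s ^ (β'-1) * (1-s) ^ (1-α'-β') * (1-a*s) ^ (α'-1)) := by ring
    _ = a ^ (1-α') * (Real.sin (β' * π) / π * ∫ s in Ioo (0:ℝ) 1,
          s ^ (β'-1) * (1-s) ^ (1-α'-β') * (1-a*s) ^ (α'-1)) := by
        rw [← Real.rpow_add h1a, show (1:ℝ)-β'+(β'-1) = 0 by ring, Real.rpow_zero, mul_one]
    _ = a ^ (1-α') * (Real.Gamma (2 - α' - β') / (Real.Gamma (1 - α') * Real.Gamma (1 - β')) *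
          ∫ s in Ioo (0:ℝ) 1, s ^ (-α') * (1-s) ^ (0:ℝ) * (1-a*s) ^ (-β')) := by rw [hEq]
    _ = Real.Gamma (2 - α' - β') / (Real.Gamma (1 - α') * Real.Gamma (1 - β')) *
        (a ^ (1-α') * ∫ s in Ioo (0:ℝ) 1, s ^ (-α') * (1-s) ^ (0:ℝ) * (1-a*s) ^ (-β')) := by ring

end Stmt17


open Real

/-- The hypergeometric identity behind the last-visit distribution: for
`α', β' ∈ (0,1)` with `α' + β' < 1` and `a ∈ (0,1)`,
`(sin(β'π)/π)·a^{1-α'}(1-a)^{1-β'} ∫₀¹ t^{1-α'-β'}(1-t)^{β'-1}(1-at)⁻¹ dt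
  = (Γ(2-α'-β')/(Γ(1-α')Γ(1-β'))) ∫₀^a t^{-α'}(1-t)^{-β'} dt`. -/
theorem stmt_17 (α' β' a : ℝ) (hα : α' ∈ Set.Ioo (0:ℝ) 1) (hβ : β' ∈ Set.Ioo (0:ℝ) 1)
    (hαβ : α' + β' < 1) (ha : a ∈ Set.Ioo (0:ℝ) 1) :
    (Real.sin (β' * π) / π) * a ^ (1 - α') * (1 - a) ^ (1 - β') *
        ∫ t in (0:ℝ)..1, t ^ (1 - α' - β') * (1 - t) ^ (β' - 1) * (1 - a*t)⁻¹
      = (Real.Gamma (2 - α' - β') / (Real.Gamma (1 - α') * Real.Gamma (1 - β'))) *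
        ∫ t in (0:ℝ)..a, t ^ (-α') * (1 - t) ^ (-β') := by
  exact Stmt17.main α' β' a hα hβ hαβ ha
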